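/- For every odd prime p, one has 24·∑_{x} σ₁((p²−x²)/4) = 5p³ − 6p² − 5p + 6, where the sum runs over the odd integers x with 0 < x < p (for such x, (p²−x²)/4 is a positive integer). (Combined with the formula a_{p²} = 24·∑_{x∈ℤ, 4∣(p²−x²)} σ₁((p²−x²)/4) + 12p² − 2 = 10·(1 + deg F_{p²,i}), this shows that the degree of any Humbert component F_{p²,i} is p³ − p.) -/

import Mathlib

/-- `σ₁(n)`, the sum of the positive divisors of `n`. -/
def sigma1 (n : ℕ) : ℕ := ∑ d ∈ n.divisors, d

open Finset

namespace HumbertAux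

/-- Quadruples (a,b,x,y) of positive integers with a*x+b*y = n. -/
def T (n : ℕ) : Finset (ℕ × ℕ × ℕ × ℕ) :=
  ((range (n+1)) ×ˢ (range (n+1)) ×ˢ (range (n+1)) ×ˢ (range (n+1))).filter
    fun q => 0 < q.1 ∧ 0 < q.2.1 ∧ 0 < q.2.2.1 ∧ 0 < q.2.2.2 ∧
      q.1 * q.2.2.1 + q.2.1 * q.2.2.2 = n

lemma mem_T {n : ℕ} {q : ℕ × ℕ × ℕ × ℕ} :
    q ∈ T n ↔ 0 < q.1 ∧ 0 < q.2.1 ∧ 0 < q.2.2.1 ∧ 0 < q.2.2.2 ∧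
      q.1 * q.2.2.1 + q.2.1 * q.2.2.2 = n := by
  obtain ⟨a, b, x, y⟩ := q
  simp only [T, mem_filter, mem_product, mem_range]
  constructor
  · rintro ⟨-, h⟩; exact h
  · rintro ⟨ha, hb, hx, hy, he⟩
    refine ⟨⟨?_, ?_, ?_, ?_⟩, ha, hb, hx, hy, he⟩ <;> simp only [Nat.lt_succ_iff] <;> nlinarith

/-- Triples (a,b,y) with 1 ≤ a,b,y, b*y + a ≤ n, a ∣ n - b*y. -/
def P (n : ℕ) : Finset (ℕ × ℕ × ℕ) :=
  ((range (n+1)) ×ˢ (range (n+1)) ×ˢ (range (n+1))).filter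
    fun t => 0 < t.1 ∧ 0 < t.2.1 ∧ 0 < t.2.2 ∧ t.2.1 * t.2.2 + t.1 ≤ n ∧
      t.1 ∣ (n - t.2.1 * t.2.2)

lemma mem_P {n : ℕ} {t : ℕ × ℕ × ℕ} :
    t ∈ P n ↔ 0 < t.1 ∧ 0 < t.2.1 ∧ 0 < t.2.2 ∧ t.2.1 * t.2.2 + t.1 ≤ n ∧
      t.1 ∣ (n - t.2.1 * t.2.2) := by
  obtain ⟨a, b, y⟩ := t
  simp only [P, mem_filter, mem_product, mem_range]
  constructor
  · rintro ⟨-, h⟩; exact h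
  · rintro ⟨ha, hb, hy, hle, hdvd⟩
    refine ⟨⟨?_, ?_, ?_⟩, ha, hb, hy, hle, hdvd⟩ <;> simp only [Nat.lt_succ_iff] <;> nlinarith

/-- Triples (a,b,y) with 1 ≤ a,b,y, a ≤ n, b*y ≤ n, a ∣ n - b*y. -/
def Q (n : ℕ) : Finset (ℕ × ℕ × ℕ) :=
  ((range (n+1)) ×ˢ (range (n+1)) ×ˢ (range (n+1))).filter
    fun t => 0 < t.1 ∧ 0 < t.2.1 ∧ 0 < t.2.2 ∧ t.1 ≤ n ∧ t.2.1 * t.2.2 ≤ n ∧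
      t.1 ∣ (n - t.2.1 * t.2.2)

end HumbertAux

namespace HumbertAux

lemma mem_Q {n : ℕ} {t : ℕ × ℕ × ℕ} :
    t ∈ Q n ↔ 0 < t.1 ∧ 0 < t.2.1 ∧ 0 < t.2.2 ∧ t.1 ≤ n ∧ t.2.1 * t.2.2 ≤ n ∧
      t.1 ∣ (n - t.2.1 * t.2.2) := by
  obtain ⟨a, b, y⟩ := t
  simp only [Q, mem_filter, mem_product, mem_range]
  constructor
  · rintro ⟨-, h⟩; exact h
  · rintro ⟨ha, hb, hy, han, hle, hdvd⟩
    refine ⟨⟨?_, ?_, ?_⟩, ha, hb, hy, han, hle, hdvd⟩ <;> simp only [Nat.lt_succ_iff] <;> nlinarith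

/-- e6a : the x<y part of T, projected to triples. -/
lemma e6a (n : ℕ) :
    ∑ q ∈ (T n).filter (fun q => q.2.2.1 < q.2.2.2), ((q.1 : ℤ))^2 =
      ∑ t ∈ (P n).filter (fun t => n < (t.1 + t.2.1) * t.2.2), ((t.1 : ℤ))^2 := by
  refine Finset.sum_nbij' (fun q => (q.1, q.2.1, q.2.2.2))
    (fun t => (t.1, t.2.1, (n - t.2.1 * t.2.2) / t.1, t.2.2)) ?_ ?_ ?_ ?_ ?_
  · rintro ⟨a, b, x, y⟩ hq
    simp only [mem_filter, mem_T] at hq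
    obtain ⟨⟨ha, hb, hx, hy, he⟩, hxy⟩ := hq
    simp only [mem_filter, mem_P]
    have h1 : b * y + a ≤ n := by nlinarith
    have h2 : n - b * y = a * x := by omega
    refine ⟨⟨ha, hb, hy, h1, ?_⟩, ?_⟩
    · rw [h2]; exact Dvd.intro x rfl
    · nlinarith
  · rintro ⟨a, b, y⟩ ht
    simp only [mem_filter, mem_P] at ht
    obtain ⟨⟨ha, hb, hy, hle, hdvd⟩, hgt⟩ := ht
    simp only [mem_filter, mem_T]
    have hpos : 0 < n - b * y := by omega
    have hxpos : 0 < (n - b * y) / a := Nat.div_pos (Nat.le_of_dvd hpos hdvd) ha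
    have hax : a * ((n - b * y) / a) = n - b * y := Nat.mul_div_cancel' hdvd
    refine ⟨⟨ha, hb, hxpos, hy, by omega⟩, ?_⟩
    -- x < y
    have : a * ((n - b * y) / a) < a * y := by
      rw [hax]
      have hgt' : n < a * y + b * y := by nlinarith
      omega
    exact lt_of_mul_lt_mul_left this (Nat.zero_le a)
  · rintro ⟨a, b, x, y⟩ hq
    simp only [mem_filter, mem_T] at hq
    obtain ⟨⟨ha, hb, hx, hy, he⟩, -⟩ := hq
    have h2 : n - b * y = a * x := by omega
    simp only [h2, Nat.mul_div_cancel_left x ha]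
  · rintro ⟨a, b, y⟩ ht; rfl
  · rintro ⟨a, b, x, y⟩ hq; rfl

/-- e6b : the b<a part of T, projected to triples. -/
lemma e6b (n : ℕ) :
    ∑ q ∈ (T n).filter (fun q => q.2.1 < q.1), ((q.1 : ℤ))^2 =
      ∑ t ∈ (P n).filter (fun t => t.2.1 < t.1), ((t.1 : ℤ))^2 := by
  refine Finset.sum_nbij' (fun q => (q.1, q.2.1, q.2.2.2))
    (fun t => (t.1, t.2.1, (n - t.2.1 * t.2.2) / t.1, t.2.2)) ?_ ?_ ?_ ?_ ?_
  · rintro ⟨a, b, x, y⟩ hq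
    simp only [mem_filter, mem_T] at hq
    obtain ⟨⟨ha, hb, hx, hy, he⟩, hba⟩ := hq
    simp only [mem_filter, mem_P]
    have h1 : b * y + a ≤ n := by nlinarith
    have h2 : n - b * y = a * x := by omega
    exact ⟨⟨ha, hb, hy, h1, by rw [h2]; exact Dvd.intro x rfl⟩, hba⟩
  · rintro ⟨a, b, y⟩ ht
    simp only [mem_filter, mem_P] at ht
    obtain ⟨⟨ha, hb, hy, hle, hdvd⟩, hba⟩ := ht
    simp only [mem_filter, mem_T]
    have hpos : 0 < n - b * y := by omega
    have hxpos : 0 < (n - b * y) / a := Nat.div_pos (Nat.le_of_dvd hpos hdvd) ha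
    have hax : a * ((n - b * y) / a) = n - b * y := Nat.mul_div_cancel' hdvd
    exact ⟨⟨ha, hb, hxpos, hy, by omega⟩, hba⟩
  · rintro ⟨a, b, x, y⟩ hq
    simp only [mem_filter, mem_T] at hq
    obtain ⟨⟨ha, hb, hx, hy, he⟩, -⟩ := hq
    have h2 : n - b * y = a * x := by omega
    simp only [h2, Nat.mul_div_cancel_left x ha]
  · rintro ⟨a, b, y⟩ ht; rfl
  · rintro ⟨a, b, x, y⟩ hq; rfl

end HumbertAux

namespace HumbertAux

/-- e6c : shift bijection. -/
lemma e6c (n : ℕ) :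
    ∑ t ∈ (P n).filter (fun t => (t.1 + t.2.1) * t.2.2 ≤ n), ((t.1 : ℤ))^2 =
      ∑ t ∈ (Q n).filter (fun t => t.1 < t.2.1), ((t.1 : ℤ))^2 := by
  refine Finset.sum_nbij' (fun t => (t.1, t.2.1 + t.1, t.2.2))
    (fun t => (t.1, t.2.1 - t.1, t.2.2)) ?_ ?_ ?_ ?_ ?_
  · rintro ⟨a, b, y⟩ ht
    simp only [mem_filter, mem_P] at ht
    obtain ⟨⟨ha, hb, hy, hle, hdvd⟩, hc⟩ := ht
    have hmul : (a + b) * y = a * y + b * y := by ring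
    rw [hmul] at hc
    simp only [mem_filter, mem_Q]
    have h1 : (b + a) * y = b * y + a * y := by ring
    refine ⟨⟨ha, by omega, hy, by omega, by omega, ?_⟩, by omega⟩
    · rw [h1]
      have h2 : n - (b * y + a * y) = (n - b * y) - a * y := by omega
      rw [h2]
      exact Nat.dvd_sub hdvd (Dvd.intro y rfl)
  · rintro ⟨a, b, y⟩ ht
    simp only [mem_filter, mem_Q] at ht
    obtain ⟨⟨ha, hb, hy, han, hle, hdvd⟩, hab⟩ := ht
    simp only [mem_filter, mem_P]
    have h1 : (b - a) * y = b * y - a * y := by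
      rw [Nat.sub_mul]
    have hay : a ≤ a * y := Nat.le_mul_of_pos_right a hy
    have hay' : a * y ≤ b * y := Nat.mul_le_mul_right y (le_of_lt hab)
    refine ⟨⟨ha, by omega, hy, by omega, ?_⟩, ?_⟩
    · rw [h1]
      have h2 : n - (b * y - a * y) = (n - b * y) + a * y := by omega
      rw [h2]
      exact Nat.dvd_add hdvd (Dvd.intro y rfl)
    · have h3 : (a + (b - a)) = b := by omega
      rw [h3]; omega
  · rintro ⟨a, b, y⟩ ht; simp
  · rintro ⟨a, b, y⟩ ht
    simp only [mem_filter, mem_Q] at ht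
    obtain ⟨⟨ha, hb, hy, han, hle, hdvd⟩, hab⟩ := ht
    have hba : b - a + a = b := by omega
    simp only [hba]
  · rintro ⟨a, b, y⟩ ht; rfl

/-- e6d : P ∪ (diagonal part) = Q, for the a ≤ b halves. -/
lemma e6d (n : ℕ) :
    ∑ t ∈ (Q n).filter (fun t => t.1 ≤ t.2.1), ((t.1 : ℤ))^2 =
      ∑ t ∈ (P n).filter (fun t => t.1 ≤ t.2.1), ((t.1 : ℤ))^2 +
      ∑ t ∈ (Q n).filter (fun t => t.1 ≤ t.2.1 ∧ t.2.1 * t.2.2 = n), ((t.1 : ℤ))^2 := by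
  have hsplit := Finset.sum_filter_add_sum_filter_not
    ((Q n).filter (fun t => t.1 ≤ t.2.1)) (fun t => t.2.1 * t.2.2 = n)
    (fun t => ((t.1 : ℤ))^2)
  rw [← hsplit]
  have h1 : ((Q n).filter (fun t => t.1 ≤ t.2.1)).filter (fun t => ¬ t.2.1 * t.2.2 = n) =
      (P n).filter (fun t => t.1 ≤ t.2.1) := by
    ext ⟨a, b, y⟩
    simp only [mem_filter, mem_Q, mem_P]
    constructor
    · rintro ⟨⟨⟨ha, hb, hy, han, hle, hdvd⟩, hab⟩, hne⟩
      have hpos : 0 < n - b * y := by omega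
      have := Nat.le_of_dvd hpos hdvd
      exact ⟨⟨ha, hb, hy, by omega, hdvd⟩, hab⟩
    · rintro ⟨⟨ha, hb, hy, hle, hdvd⟩, hab⟩
      exact ⟨⟨⟨ha, hb, hy, by omega, by omega, hdvd⟩, hab⟩, by omega⟩
  have h2 : ((Q n).filter (fun t => t.1 ≤ t.2.1)).filter (fun t => t.2.1 * t.2.2 = n) =
      (Q n).filter (fun t => t.1 ≤ t.2.1 ∧ t.2.1 * t.2.2 = n) := by
    rw [Finset.filter_filter]
  rw [h1, h2, add_comm]

end HumbertAux

namespace HumbertAux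

/-- e6f : diagonal a = b of Q. -/
lemma e6f (n : ℕ) (hn : 0 < n) :
    ∑ t ∈ (Q n).filter (fun t => t.1 = t.2.1), ((t.1 : ℤ))^2 =
      ∑ d ∈ n.divisors, ((n / d : ℕ) : ℤ) * (d : ℤ)^2 := by
  have hrhs : ∀ d ∈ n.divisors, ((n / d : ℕ) : ℤ) * (d : ℤ)^2 =
      ∑ y ∈ Finset.Icc 1 (n / d), ((d : ℤ))^2 := by
    intro d hd
    rw [Finset.sum_const, Nat.card_Icc]
    simp [nsmul_eq_mul]
  rw [Finset.sum_congr rfl hrhs, Finset.sum_sigma']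
  refine Finset.sum_nbij' (fun t => (⟨t.1, t.2.2⟩ : (_ : ℕ) × ℕ))
    (fun s => (s.1, s.1, s.2)) ?_ ?_ ?_ ?_ ?_
  · rintro ⟨a, b, y⟩ ht
    simp only [mem_filter, mem_Q] at ht
    obtain ⟨⟨ha, hb, hy, han, hle, hdvd⟩, hab⟩ := ht
    subst hab
    simp only [Finset.mem_sigma, Nat.mem_divisors, Finset.mem_Icc]
    have hdn : a ∣ n := by
      have h1 : a ∣ a * y := Dvd.intro y rfl
      have h2 : n - a * y + a * y = n := by omega
      have := Nat.dvd_add hdvd h1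
      rwa [h2] at this
    refine ⟨⟨hdn, by omega⟩, by omega, ?_⟩
    exact Nat.le_div_iff_mul_le ha |>.mpr (by rw [mul_comm]; exact hle)
  · rintro ⟨d, y⟩ hs
    simp only [Finset.mem_sigma, Nat.mem_divisors, Finset.mem_Icc] at hs
    obtain ⟨⟨hdvd, -⟩, hy1, hy2⟩ := hs
    simp only [mem_filter, mem_Q]
    have hd : 0 < d := Nat.pos_of_dvd_of_pos hdvd hn
    have hdy : d * y ≤ n := by
      calc d * y ≤ d * (n / d) := Nat.mul_le_mul_left d hy2
      _ = n := Nat.mul_div_cancel' hdvd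
    exact ⟨⟨hd, hd, by omega, Nat.le_of_dvd hn hdvd, hdy,
      (Nat.dvd_sub hdvd (Dvd.intro y rfl))⟩, trivial⟩
  · rintro ⟨a, b, y⟩ ht
    simp only [mem_filter, mem_Q] at ht
    obtain ⟨⟨-, -, -, -, -, -⟩, hab⟩ := ht
    simp [hab]
  · rintro ⟨d, y⟩ hs; rfl
  · rintro ⟨a, b, y⟩ ht; rfl

/-- e6g : the b*y = n part of Q with a ≤ b. -/
lemma e6g (n : ℕ) (hn : 0 < n) :
    ∑ t ∈ (Q n).filter (fun t => t.1 ≤ t.2.1 ∧ t.2.1 * t.2.2 = n), ((t.1 : ℤ))^2 =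
      ∑ d ∈ n.divisors, ∑ k ∈ Finset.Icc 1 d, ((k : ℤ))^2 := by
  rw [Finset.sum_sigma']
  refine Finset.sum_nbij' (fun t => (⟨t.2.1, t.1⟩ : (_ : ℕ) × ℕ))
    (fun s => (s.2, s.1, n / s.1)) ?_ ?_ ?_ ?_ ?_
  · rintro ⟨a, b, y⟩ ht
    simp only [mem_filter, mem_Q] at ht
    obtain ⟨⟨ha, hb, hy, han, hle, hdvd⟩, hab, hby⟩ := ht
    simp only [Finset.mem_sigma, Nat.mem_divisors, Finset.mem_Icc]
    exact ⟨⟨⟨y, hby.symm⟩, by omega⟩, by omega, hab⟩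
  · rintro ⟨d, k⟩ hs
    simp only [Finset.mem_sigma, Nat.mem_divisors, Finset.mem_Icc] at hs
    obtain ⟨⟨hdvd, -⟩, hk1, hk2⟩ := hs
    simp only [mem_filter, mem_Q]
    have hd : 0 < d := Nat.pos_of_dvd_of_pos hdvd hn
    have hdn : d * (n / d) = n := Nat.mul_div_cancel' hdvd
    have hdn' : d ≤ n := Nat.le_of_dvd hn hdvd
    refine ⟨⟨by omega, hd, ?_, by omega, by omega, ?_⟩, hk2, hdn⟩
    · exact Nat.div_pos hdn' hd
    · simp [hdn]
  · rintro ⟨a, b, y⟩ ht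
    simp only [mem_filter, mem_Q] at ht
    obtain ⟨⟨ha, hb, hy, han, hle, hdvd⟩, hab, hby⟩ := ht
    have : n / b = y := by
      rw [← hby]; exact Nat.mul_div_cancel_left y hb
    simp [this]
  · rintro ⟨d, k⟩ hs; rfl
  · rintro ⟨a, b, y⟩ ht; rfl

end HumbertAux

namespace HumbertAux

/-- The key counting identity (Liouville-style). -/
lemma E6 (n : ℕ) (hn : 0 < n) :
    ∑ q ∈ (T n).filter (fun q => q.2.2.1 < q.2.2.2), ((q.1 : ℤ))^2
      - ∑ q ∈ (T n).filter (fun q => q.2.1 < q.1), ((q.1 : ℤ))^2 =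
    ∑ d ∈ n.divisors, ((n / d : ℕ) : ℤ) * (d : ℤ)^2
      - ∑ d ∈ n.divisors, ∑ k ∈ Finset.Icc 1 d, ((k : ℤ))^2 := by
  rw [e6a, e6b]
  have h1 := Finset.sum_filter_add_sum_filter_not (P n)
    (fun t => (t.1 + t.2.1) * t.2.2 ≤ n) (fun t => ((t.1 : ℤ))^2)
  have h2 := Finset.sum_filter_add_sum_filter_not (P n)
    (fun t => t.1 ≤ t.2.1) (fun t => ((t.1 : ℤ))^2)
  have h3 := Finset.sum_filter_add_sum_filter_not ((Q n).filter (fun t => t.1 ≤ t.2.1))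
    (fun t => t.1 = t.2.1) (fun t => ((t.1 : ℤ))^2)
  have r1 : (P n).filter (fun t => ¬ (t.1 + t.2.1) * t.2.2 ≤ n) =
      (P n).filter (fun t => n < (t.1 + t.2.1) * t.2.2) := by
    apply Finset.filter_congr; intro t ht; simp [Nat.not_le]
  have r2 : (P n).filter (fun t => ¬ t.1 ≤ t.2.1) =
      (P n).filter (fun t => t.2.1 < t.1) := by
    apply Finset.filter_congr; intro t ht; simp [Nat.not_le]
  have r3 : ((Q n).filter (fun t => t.1 ≤ t.2.1)).filter (fun t => t.1 = t.2.1) =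
      (Q n).filter (fun t => t.1 = t.2.1) := by
    rw [Finset.filter_filter]
    apply Finset.filter_congr; intro t ht
    constructor
    · rintro ⟨h1', h2'⟩; omega
    · rintro h; constructor <;> omega
  have r4 : ((Q n).filter (fun t => t.1 ≤ t.2.1)).filter (fun t => ¬ t.1 = t.2.1) =
      (Q n).filter (fun t => t.1 < t.2.1) := by
    rw [Finset.filter_filter]
    apply Finset.filter_congr; intro t ht
    constructor
    · rintro ⟨h1', h2'⟩; omega
    · rintro h; constructor <;> omega
  rw [r1] at h1
  rw [r2] at h2
  rw [r3, r4] at h3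
  have hd := e6d n
  have hc := e6c n
  have hf := e6f n hn
  have hg := e6g n hn
  linarith [h1, h2, h3, hd, hc, hf, hg]

end HumbertAux

namespace HumbertAux

/-- τ-symmetry: (a,b,x,y) ↦ (b,a,y,x). -/
lemma tau_bij (n : ℕ) (f : ℕ × ℕ × ℕ × ℕ → ℤ) (c c' : ℕ × ℕ × ℕ × ℕ → Prop)
    [DecidablePred c] [DecidablePred c']
    (hc : ∀ q, q ∈ T n → (c q ↔ c' (q.2.1, q.1, q.2.2.2, q.2.2.1)))
    (hf : ∀ q, q ∈ T n → f q = f (q.2.1, q.1, q.2.2.2, q.2.2.1)) :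
    ∑ q ∈ (T n).filter c, f q = ∑ q ∈ (T n).filter c', f q := by
  refine Finset.sum_nbij' (fun q => (q.2.1, q.1, q.2.2.2, q.2.2.1))
    (fun q => (q.2.1, q.1, q.2.2.2, q.2.2.1)) ?_ ?_ ?_ ?_ ?_
  · rintro ⟨a, b, x, y⟩ hq
    simp only [mem_filter] at hq ⊢
    obtain ⟨hT, hcq⟩ := hq
    have hT' : ((b, a, y, x) : ℕ × ℕ × ℕ × ℕ) ∈ T n := by
      rw [mem_T] at hT ⊢
      dsimp only at hT ⊢
      exact ⟨hT.2.1, hT.1, hT.2.2.2.1, hT.2.2.1, by omega⟩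
    exact ⟨hT', (hc _ hT).mp hcq⟩
  · rintro ⟨a, b, x, y⟩ hq
    simp only [mem_filter] at hq ⊢
    obtain ⟨hT, hcq⟩ := hq
    have hT' : ((b, a, y, x) : ℕ × ℕ × ℕ × ℕ) ∈ T n := by
      rw [mem_T] at hT ⊢
      dsimp only at hT ⊢
      exact ⟨hT.2.1, hT.1, hT.2.2.2.1, hT.2.2.1, by omega⟩
    refine ⟨hT', ?_⟩
    exact (hc _ hT').mpr hcq
  · rintro ⟨a, b, x, y⟩ hq; rfl
  · rintro ⟨a, b, x, y⟩ hq; rfl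
  · rintro ⟨a, b, x, y⟩ hq
    simp only [mem_filter] at hq
    exact hf _ hq.1

lemma e2 (n : ℕ) :
    ∑ q ∈ T n, ((q.1 : ℤ) - q.2.1)^2 =
      2 * ∑ q ∈ (T n).filter (fun q => q.2.1 < q.1), ((q.1 : ℤ) - q.2.1)^2 := by
  have h1 := Finset.sum_filter_add_sum_filter_not (T n) (fun q => q.2.1 < q.1)
    (fun q => ((q.1 : ℤ) - q.2.1)^2)
  have h2 := Finset.sum_filter_add_sum_filter_not ((T n).filter (fun q => ¬ q.2.1 < q.1))
    (fun q => q.1 < q.2.1) (fun q => ((q.1 : ℤ) - q.2.1)^2)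
  have r1 : ((T n).filter (fun q => ¬ q.2.1 < q.1)).filter (fun q => q.1 < q.2.1) =
      (T n).filter (fun q => q.1 < q.2.1) := by
    rw [Finset.filter_filter]
    apply Finset.filter_congr; intro q hq
    constructor
    · rintro ⟨-, h⟩; exact h
    · intro h; exact ⟨by omega, h⟩
  have r2 : ∑ q ∈ ((T n).filter (fun q => ¬ q.2.1 < q.1)).filter (fun q => ¬ q.1 < q.2.1),
      ((q.1 : ℤ) - q.2.1)^2 = 0 := by
    apply Finset.sum_eq_zero
    intro q hq
    simp only [Finset.mem_filter] at hq
    have : q.1 = q.2.1 := by omega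
    rw [this]; ring
  have r3 : ∑ q ∈ (T n).filter (fun q => q.1 < q.2.1), ((q.1 : ℤ) - q.2.1)^2 =
      ∑ q ∈ (T n).filter (fun q => q.2.1 < q.1), ((q.1 : ℤ) - q.2.1)^2 := by
    apply tau_bij
    · intro q hq; rfl
    · intro q hq; ring
  rw [r1] at h2
  linarith [h1, h2, r2, r3]

lemma e3 (n : ℕ) :
    ∑ q ∈ T n, ((q.1 : ℤ) + q.2.1)^2 =
      2 * ∑ q ∈ (T n).filter (fun q => q.2.2.1 < q.2.2.2), ((q.1 : ℤ) + q.2.1)^2 +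
      ∑ q ∈ (T n).filter (fun q => q.2.2.1 = q.2.2.2), ((q.1 : ℤ) + q.2.1)^2 := by
  have h1 := Finset.sum_filter_add_sum_filter_not (T n) (fun q => q.2.2.1 < q.2.2.2)
    (fun q => ((q.1 : ℤ) + q.2.1)^2)
  have h2 := Finset.sum_filter_add_sum_filter_not ((T n).filter (fun q => ¬ q.2.2.1 < q.2.2.2))
    (fun q => q.2.2.2 < q.2.2.1) (fun q => ((q.1 : ℤ) + q.2.1)^2)
  have r1 : ((T n).filter (fun q => ¬ q.2.2.1 < q.2.2.2)).filter (fun q => q.2.2.2 < q.2.2.1) =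
      (T n).filter (fun q => q.2.2.2 < q.2.2.1) := by
    rw [Finset.filter_filter]
    apply Finset.filter_congr; intro q hq
    constructor
    · rintro ⟨-, h⟩; exact h
    · intro h; exact ⟨by omega, h⟩
  have r2 : ((T n).filter (fun q => ¬ q.2.2.1 < q.2.2.2)).filter (fun q => ¬ q.2.2.2 < q.2.2.1) =
      (T n).filter (fun q => q.2.2.1 = q.2.2.2) := by
    rw [Finset.filter_filter]
    apply Finset.filter_congr; intro q hq
    constructor
    · rintro ⟨h1', h2'⟩; omega
    · intro h; constructor <;> omega
  have r3 : ∑ q ∈ (T n).filter (fun q => q.2.2.2 < q.2.2.1), ((q.1 : ℤ) + q.2.1)^2 =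
      ∑ q ∈ (T n).filter (fun q => q.2.2.1 < q.2.2.2), ((q.1 : ℤ) + q.2.1)^2 := by
    apply tau_bij
    · intro q hq; rfl
    · intro q hq; ring
  rw [r1, r2] at h2
  linarith [h1, h2, r3]

end HumbertAux

namespace HumbertAux

/-- φ-bijection: ∑_{a>b} (a-b)² = ∑_{x<y} a². -/
lemma e4 (n : ℕ) :
    ∑ q ∈ (T n).filter (fun q => q.2.1 < q.1), ((q.1 : ℤ) - q.2.1)^2 =
      ∑ q ∈ (T n).filter (fun q => q.2.2.1 < q.2.2.2), ((q.1 : ℤ))^2 := by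
  refine Finset.sum_nbij' (fun q => (q.1 - q.2.1, q.2.1, q.2.2.1, q.2.2.1 + q.2.2.2))
    (fun q => (q.1 + q.2.1, q.2.1, q.2.2.1, q.2.2.2 - q.2.2.1)) ?_ ?_ ?_ ?_ ?_
  · rintro ⟨a, b, x, y⟩ hq
    simp only [mem_filter, mem_T] at hq ⊢
    obtain ⟨⟨ha, hb, hx, hy, he⟩, hba⟩ := hq
    have hsub : (a - b) * x = a * x - b * x := by rw [Nat.sub_mul]
    have hbx : b * x ≤ a * x := Nat.mul_le_mul_right x (le_of_lt hba)
    refine ⟨⟨by omega, hb, hx, by omega, ?_⟩, by omega⟩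
    have hmul : b * (x + y) = b * x + b * y := by ring
    omega
  · rintro ⟨a, b, x, y⟩ hq
    simp only [mem_filter, mem_T] at hq ⊢
    obtain ⟨⟨ha, hb, hx, hy, he⟩, hxy⟩ := hq
    have hadd : (a + b) * x = a * x + b * x := by ring
    have hsub : b * (y - x) = b * y - b * x := by rw [Nat.mul_sub]
    have hbx : b * x ≤ b * y := Nat.mul_le_mul_left b (le_of_lt hxy)
    refine ⟨⟨by omega, hb, hx, by omega, by omega⟩, by omega⟩
  · rintro ⟨a, b, x, y⟩ hq
    simp only [mem_filter, mem_T] at hq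
    obtain ⟨⟨ha, hb, hx, hy, he⟩, hba⟩ := hq
    simp only
    rw [Nat.sub_add_cancel (le_of_lt hba), Nat.add_sub_cancel_left]
  · rintro ⟨a, b, x, y⟩ hq
    simp only [mem_filter, mem_T] at hq
    obtain ⟨⟨ha, hb, hx, hy, he⟩, hxy⟩ := hq
    simp only
    rw [Nat.add_sub_cancel, Nat.add_sub_cancel' (le_of_lt hxy)]
  · rintro ⟨a, b, x, y⟩ hq
    simp only [mem_filter, mem_T] at hq
    obtain ⟨⟨ha, hb, hx, hy, he⟩, hba⟩ := hq
    simp only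
    rw [Nat.cast_sub (le_of_lt hba)]

end HumbertAux

namespace HumbertAux

/-- ψ-bijection: ∑_{x<y} (a+b)² = ∑_{a>b} a². -/
lemma e5 (n : ℕ) :
    ∑ q ∈ (T n).filter (fun q => q.2.2.1 < q.2.2.2), ((q.1 : ℤ) + q.2.1)^2 =
      ∑ q ∈ (T n).filter (fun q => q.2.1 < q.1), ((q.1 : ℤ))^2 := by
  refine Finset.sum_nbij' (fun q => (q.1 + q.2.1, q.2.1, q.2.2.1, q.2.2.2 - q.2.2.1))
    (fun q => (q.1 - q.2.1, q.2.1, q.2.2.1, q.2.2.1 + q.2.2.2)) ?_ ?_ ?_ ?_ ?_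
  · rintro ⟨a, b, x, y⟩ hq
    simp only [mem_filter, mem_T] at hq ⊢
    obtain ⟨⟨ha, hb, hx, hy, he⟩, hxy⟩ := hq
    have hadd : (a + b) * x = a * x + b * x := by ring
    have hsub : b * (y - x) = b * y - b * x := by rw [Nat.mul_sub]
    have hbx : b * x ≤ b * y := Nat.mul_le_mul_left b (le_of_lt hxy)
    refine ⟨⟨by omega, hb, hx, by omega, by omega⟩, by omega⟩
  · rintro ⟨a, b, x, y⟩ hq
    simp only [mem_filter, mem_T] at hq ⊢
    obtain ⟨⟨ha, hb, hx, hy, he⟩, hba⟩ := hq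
    have hsub : (a - b) * x = a * x - b * x := by rw [Nat.sub_mul]
    have hbx : b * x ≤ a * x := Nat.mul_le_mul_right x (le_of_lt hba)
    have hmul : b * (x + y) = b * x + b * y := by ring
    refine ⟨⟨by omega, hb, hx, by omega, by omega⟩, by omega⟩
  · rintro ⟨a, b, x, y⟩ hq
    simp only [mem_filter, mem_T] at hq
    obtain ⟨⟨ha, hb, hx, hy, he⟩, hxy⟩ := hq
    simp only
    rw [Nat.add_sub_cancel, Nat.add_sub_cancel' (le_of_lt hxy)]
  · rintro ⟨a, b, x, y⟩ hq
    simp only [mem_filter, mem_T] at hq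
    obtain ⟨⟨ha, hb, hx, hy, he⟩, hba⟩ := hq
    simp only
    rw [Nat.sub_add_cancel (le_of_lt hba), Nat.add_sub_cancel_left]
  · rintro ⟨a, b, x, y⟩ hq
    simp only
    push_cast
    ring

/-- the diagonal x = y of T. -/
lemma e7 (n : ℕ) (hn : 0 < n) :
    ∑ q ∈ (T n).filter (fun q => q.2.2.1 = q.2.2.2), ((q.1 : ℤ) + q.2.1)^2 =
      ∑ d ∈ n.divisors, ((d : ℤ) - 1) * (d : ℤ)^2 := by
  have hrhs : ∀ d ∈ n.divisors, ((d : ℤ) - 1) * (d : ℤ)^2 =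
      ∑ a ∈ Finset.Icc 1 (d - 1), ((d : ℤ))^2 := by
    intro d hd
    rw [Nat.mem_divisors] at hd
    have hd1 : 1 ≤ d := Nat.pos_of_dvd_of_pos hd.1 hn
    rw [Finset.sum_const, Nat.card_Icc]
    have : d - 1 + 1 - 1 = d - 1 := by omega
    rw [this, nsmul_eq_mul]
    have : ((d - 1 : ℕ) : ℤ) = (d : ℤ) - 1 := by omega
    rw [this]
  rw [Finset.sum_congr rfl hrhs, Finset.sum_sigma']
  refine Finset.sum_nbij' (fun q => (⟨q.1 + q.2.1, q.1⟩ : (_ : ℕ) × ℕ))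
    (fun s => (s.2, s.1 - s.2, n / s.1, n / s.1)) ?_ ?_ ?_ ?_ ?_
  · rintro ⟨a, b, x, y⟩ hq
    simp only [mem_filter, mem_T] at hq
    obtain ⟨⟨ha, hb, hx, hy, he⟩, hxy⟩ := hq
    subst hxy
    simp only [Finset.mem_sigma, Nat.mem_divisors, Finset.mem_Icc]
    have hd : (a + b) * x = n := by rw [Nat.add_mul]; omega
    exact ⟨⟨⟨x, hd.symm⟩, by omega⟩, by omega, by omega⟩
  · rintro ⟨d, a⟩ hs
    simp only [Finset.mem_sigma, Nat.mem_divisors, Finset.mem_Icc] at hs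
    obtain ⟨⟨hdvd, -⟩, ha1, ha2⟩ := hs
    simp only [mem_filter, mem_T]
    have hd : 0 < d := Nat.pos_of_dvd_of_pos hdvd hn
    have hdn : d * (n / d) = n := Nat.mul_div_cancel' hdvd
    have hx : 0 < n / d := Nat.div_pos (Nat.le_of_dvd hn hdvd) hd
    refine ⟨⟨by omega, by omega, hx, hx, ?_⟩, trivial⟩
    have : a * (n / d) + (d - a) * (n / d) = d * (n / d) := by
      rw [← Nat.add_mul]; congr 1; omega
    omega
  · rintro ⟨a, b, x, y⟩ hq
    simp only [mem_filter, mem_T] at hq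
    obtain ⟨⟨ha, hb, hx, hy, he⟩, hxy⟩ := hq
    subst hxy
    simp only
    have hd : (a + b) * x = n := by rw [Nat.add_mul]; omega
    have hx' : n / (a + b) = x := by rw [← hd]; exact Nat.mul_div_cancel_left x (by omega)
    rw [hx', Nat.add_sub_cancel_left]
  · rintro ⟨d, a⟩ hs
    simp only [Finset.mem_sigma, Nat.mem_divisors, Finset.mem_Icc] at hs
    obtain ⟨⟨hdvd, -⟩, ha1, ha2⟩ := hs
    simp only
    have : a + (d - a) = d := by omega
    simp [this]
  · rintro ⟨a, b, x, y⟩ hq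
    simp only
    push_cast
    ring

end HumbertAux

namespace HumbertAux

lemma sumsq (d : ℕ) : (6 : ℤ) * ∑ k ∈ Finset.Icc 1 d, ((k : ℤ))^2 =
    2 * (d : ℤ)^3 + 3 * (d : ℤ)^2 + (d : ℤ) := by
  induction d with
  | zero => simp
  | succ m ih =>
    rw [Finset.sum_Icc_succ_top (by omega : 1 ≤ m + 1)]
    push_cast
    push_cast at ih
    linear_combination ih

lemma L1 (n : ℕ) :
    ∑ m ∈ Finset.Ico 1 n, ((∑ d ∈ m.divisors, d : ℕ) : ℤ) * ((∑ d ∈ (n - m).divisors, d : ℕ) : ℤ)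
      = ∑ q ∈ T n, ((q.1 : ℤ) * q.2.1) := by
  have step1 : ∀ m ∈ Finset.Ico 1 n,
      ((∑ d ∈ m.divisors, d : ℕ) : ℤ) * ((∑ d ∈ (n - m).divisors, d : ℕ) : ℤ) =
      ∑ s ∈ m.divisors ×ˢ (n - m).divisors, ((s.1 : ℤ) * s.2) := by
    intro m hm
    rw [Finset.sum_product]
    push_cast
    rw [Finset.sum_mul_sum]
  rw [Finset.sum_congr rfl step1, Finset.sum_sigma']
  refine Finset.sum_nbij' (fun s => (s.2.1, s.2.2, s.1 / s.2.1, (n - s.1) / s.2.2))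
    (fun q => (⟨q.1 * q.2.2.1, (q.1, q.2.1)⟩ : (_ : ℕ) × ℕ × ℕ)) ?_ ?_ ?_ ?_ ?_
  · rintro ⟨m, d, e⟩ hs
    simp only [Finset.mem_sigma, Finset.mem_product, Finset.mem_Ico, Nat.mem_divisors] at hs
    obtain ⟨⟨hm1, hm2⟩, ⟨hdm, hm0⟩, ⟨hen, hnm0⟩⟩ := hs
    rw [mem_T]
    dsimp only
    have hd : 0 < d := Nat.pos_of_dvd_of_pos hdm (by omega)
    have he : 0 < e := Nat.pos_of_dvd_of_pos hen (by omega)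
    have h1 : d * (m / d) = m := Nat.mul_div_cancel' hdm
    have h2 : e * ((n - m) / e) = n - m := Nat.mul_div_cancel' hen
    refine ⟨hd, he, ?_, ?_, by omega⟩
    · exact Nat.div_pos (Nat.le_of_dvd (by omega) hdm) hd
    · exact Nat.div_pos (Nat.le_of_dvd (by omega) hen) he
  · rintro ⟨a, b, x, y⟩ hq
    rw [mem_T] at hq
    dsimp only at hq
    obtain ⟨ha, hb, hx, hy, he⟩ := hq
    simp only [Finset.mem_sigma, Finset.mem_product, Finset.mem_Ico, Nat.mem_divisors]
    have hax : 0 < a * x := Nat.mul_pos ha hx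
    have hby : 0 < b * y := Nat.mul_pos hb hy
    have h2 : n - a * x = b * y := by omega
    refine ⟨⟨by omega, by omega⟩, ⟨Dvd.intro x rfl, by omega⟩, ⟨?_, by omega⟩⟩
    rw [h2]; exact Dvd.intro y rfl
  · rintro ⟨m, d, e⟩ hs
    simp only [Finset.mem_sigma, Finset.mem_product, Finset.mem_Ico, Nat.mem_divisors] at hs
    obtain ⟨⟨hm1, hm2⟩, ⟨hdm, hm0⟩, ⟨hen, hnm0⟩⟩ := hs
    have hd : 0 < d := Nat.pos_of_dvd_of_pos hdm (by omega)
    have h1 : d * (m / d) = m := Nat.mul_div_cancel' hdm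
    simp only [h1]
  · rintro ⟨a, b, x, y⟩ hq
    rw [mem_T] at hq
    dsimp only at hq
    obtain ⟨ha, hb, hx, hy, he⟩ := hq
    simp only
    have h1 : a * x / a = x := Nat.mul_div_cancel_left x ha
    have h2 : n - a * x = b * y := by omega
    have h3 : b * y / b = y := Nat.mul_div_cancel_left y hb
    rw [h1, h2, h3]
  · rintro ⟨m, d, e⟩ hs; rfl

/-- Besge's formula in divisor-sum form. -/
lemma besge (n : ℕ) (hn : 0 < n) :
    12 * ∑ m ∈ Finset.Ico 1 n,
        ((∑ d ∈ m.divisors, d : ℕ) : ℤ) * ((∑ d ∈ (n - m).divisors, d : ℕ) : ℤ) =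
      ∑ d ∈ n.divisors, (5 * (d : ℤ)^3 + (d : ℤ) - 6 * ((n / d : ℕ) : ℤ) * (d : ℤ)^2) := by
  rw [L1]
  have hpt : ∑ q ∈ T n, (((q.1 : ℤ) - q.2.1)^2 - ((q.1 : ℤ) + q.2.1)^2) =
      -4 * ∑ q ∈ T n, ((q.1 : ℤ) * q.2.1) := by
    rw [Finset.mul_sum]
    apply Finset.sum_congr rfl
    intro q hq; ring
  rw [Finset.sum_sub_distrib] at hpt
  have h2 := e2 n
  have h3 := e3 n
  have h4 := e4 n
  have h5 := e5 n
  have h6 := E6 n hn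
  have h7 := e7 n hn
  -- convert the x = y filter of e3 to the form in e7 (they are identical)
  -- combine everything
  have key : -4 * ∑ q ∈ T n, ((q.1 : ℤ) * q.2.1) =
      2 * (∑ d ∈ n.divisors, ((n / d : ℕ) : ℤ) * (d : ℤ)^2
           - ∑ d ∈ n.divisors, ∑ k ∈ Finset.Icc 1 d, ((k : ℤ))^2)
      - ∑ d ∈ n.divisors, ((d : ℤ) - 1) * (d : ℤ)^2 := by
    linarith [hpt, h2, h3, h4, h5, h6, h7]
  have expand : ∑ d ∈ n.divisors, (5 * (d : ℤ)^3 + (d : ℤ) - 6 * ((n / d : ℕ) : ℤ) * (d : ℤ)^2)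
      = -6 * ∑ d ∈ n.divisors, ((n / d : ℕ) : ℤ) * (d : ℤ)^2
        + 6 * ∑ d ∈ n.divisors, ∑ k ∈ Finset.Icc 1 d, ((k : ℤ))^2
        + 3 * ∑ d ∈ n.divisors, ((d : ℤ) - 1) * (d : ℤ)^2 := by
    rw [Finset.mul_sum, Finset.mul_sum, Finset.mul_sum, ← Finset.sum_add_distrib,
      ← Finset.sum_add_distrib]
    apply Finset.sum_congr rfl
    intro d hd
    have := sumsq d
    linarith [this]
  rw [expand]
  linarith [key]

end HumbertAux

namespace HumbertAux

lemma besge_prime (p : ℕ) (hp : p.Prime) :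
    12 * ∑ m ∈ Finset.Ico 1 p,
        ((∑ d ∈ m.divisors, d : ℕ) : ℤ) * ((∑ d ∈ (p - m).divisors, d : ℕ) : ℤ) =
      5 * (p : ℤ)^3 - 6 * (p : ℤ)^2 - 5 * (p : ℤ) + 6 := by
  rw [besge p hp.pos, hp.divisors]
  have h1p : (1 : ℕ) ≠ p := fun h => hp.one_lt.ne (by omega)
  rw [Finset.sum_pair h1p]
  rw [Nat.div_one, Nat.div_self hp.pos]
  push_cast
  ring

end HumbertAux

open HumbertAux in
theorem humbert_component_degree_sum' (p : ℕ) (hp : p.Prime) (hodd : p % 2 = 1) :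
    (24 : ℤ) *
        ∑ x ∈ (Finset.Ioo 0 p).filter (fun x => Odd x),
          ((∑ d ∈ ((p ^ 2 - x ^ 2) / 4).divisors, d : ℕ) : ℤ) =
      5 * (p : ℤ) ^ 3 - 6 * (p : ℤ) ^ 2 - 5 * (p : ℤ) + 6 := by
  have hp2 : 2 ≤ p := hp.two_le
  have hp3 : 3 ≤ p := by
    rcases Nat.lt_or_ge p 3 with h | h
    · interval_cases p <;> simp_all
    · exact h
  set h : ℕ := p / 2 with hh
  have hph : p = 2 * h + 1 := by omega
  have h1 : 1 ≤ h := by omega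
  -- Step A: reindex the odd x's to a ∈ [1, h]
  have stepA : ∑ x ∈ (Finset.Ioo 0 p).filter (fun x => Odd x),
      ((∑ d ∈ ((p ^ 2 - x ^ 2) / 4).divisors, d : ℕ) : ℤ) =
      ∑ a ∈ Finset.Icc 1 h, ((∑ d ∈ (a * (p - a)).divisors, d : ℕ) : ℤ) := by
    refine Finset.sum_nbij' (fun x => (p - x) / 2) (fun a => p - 2 * a) ?_ ?_ ?_ ?_ ?_
    · intro x hx
      simp only [Finset.mem_filter, Finset.mem_Ioo] at hx
      obtain ⟨⟨hx0, hxp⟩, hxodd⟩ := hx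
      obtain ⟨k, hk⟩ := hxodd
      simp only [Finset.mem_Icc]
      omega
    · intro a ha
      simp only [Finset.mem_Icc] at ha
      simp only [Finset.mem_filter, Finset.mem_Ioo]
      refine ⟨⟨by omega, by omega⟩, ⟨h - a, by omega⟩⟩
    · intro x hx
      simp only [Finset.mem_filter, Finset.mem_Ioo] at hx
      obtain ⟨⟨hx0, hxp⟩, ⟨k, hk⟩⟩ := hx
      omega
    · intro a ha
      simp only [Finset.mem_Icc] at ha
      omega
    · intro x hx
      simp only [Finset.mem_filter, Finset.mem_Ioo] at hx
      obtain ⟨⟨hx0, hxp⟩, ⟨k, hk⟩⟩ := hx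
      congr 2
      have hkey : p ^ 2 - x ^ 2 = 4 * (((p - x) / 2) * (p - (p - x) / 2)) := by
        have e1 : (p - x) / 2 = h - k := by omega
        have e2 : p - (h - k) = h + k + 1 := by omega
        rw [e1, e2]
        have : p ^ 2 = x ^ 2 + 4 * ((h - k) * (h + k + 1)) := by
          have hx' : x = 2 * k + 1 := hk
          have hkh : k ≤ h := by omega
          have e3 : h - k + k = h := by omega
          nlinarith [e3, hph, hx']
        omega
      rw [hkey, Nat.mul_div_cancel_left _ (by norm_num : 0 < 4)]
  rw [stepA]
  -- Step B: multiplicativity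
  have stepB : ∀ a ∈ Finset.Icc 1 h,
      ((∑ d ∈ (a * (p - a)).divisors, d : ℕ) : ℤ) =
      ((∑ d ∈ a.divisors, d : ℕ) : ℤ) * ((∑ d ∈ (p - a).divisors, d : ℕ) : ℤ) := by
    intro a ha
    simp only [Finset.mem_Icc] at ha
    have hcop : a.Coprime (p - a) := by
      have hg1 : a.gcd (p - a) ∣ a := Nat.gcd_dvd_left _ _
      have hg2 : a.gcd (p - a) ∣ (p - a) := Nat.gcd_dvd_right _ _
      have hgp : a.gcd (p - a) ∣ p := by
        have := Nat.dvd_add hg1 hg2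
        rwa [show a + (p - a) = p by omega] at this
      rcases (hp.eq_one_or_self_of_dvd _ hgp) with h' | h'
      · exact h'
      · exfalso
        have := Nat.le_of_dvd (by omega) (h' ▸ hg1)
        omega
    rw [hcop.sum_divisors_mul]
    push_cast
    ring
  rw [Finset.sum_congr rfl stepB]
  -- Step C: doubling
  have e0 : Finset.Ico 1 p = Finset.Ioc 0 (p - 1) := by
    ext m; simp only [Finset.mem_Ico, Finset.mem_Ioc]; omega
  have e1 : Finset.Icc 1 h = Finset.Ioc 0 h := by
    ext m; simp only [Finset.mem_Icc, Finset.mem_Ioc]; omega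
  have hsplit := Finset.sum_Ioc_consecutive
    (f := fun m => ((∑ d ∈ m.divisors, d : ℕ) : ℤ) * ((∑ d ∈ (p - m).divisors, d : ℕ) : ℤ))
    (show (0:ℕ) ≤ h by omega) (show h ≤ p - 1 by omega)
  have hrefl : ∑ m ∈ Finset.Ioc h (p - 1),
      ((∑ d ∈ m.divisors, d : ℕ) : ℤ) * ((∑ d ∈ (p - m).divisors, d : ℕ) : ℤ) =
      ∑ m ∈ Finset.Ioc 0 h,
      ((∑ d ∈ m.divisors, d : ℕ) : ℤ) * ((∑ d ∈ (p - m).divisors, d : ℕ) : ℤ) := by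
    refine Finset.sum_nbij' (fun m => p - m) (fun m => p - m) ?_ ?_ ?_ ?_ ?_
    · intro m hm; simp only [Finset.mem_Ioc] at hm ⊢; omega
    · intro m hm; simp only [Finset.mem_Ioc] at hm ⊢; omega
    · intro m hm; simp only [Finset.mem_Ioc] at hm; omega
    · intro m hm; simp only [Finset.mem_Ioc] at hm; omega
    · intro m hm
      simp only [Finset.mem_Ioc] at hm
      rw [show p - (p - m) = m by omega]
      ring
  have stepC : 2 * ∑ a ∈ Finset.Icc 1 h,
      ((∑ d ∈ a.divisors, d : ℕ) : ℤ) * ((∑ d ∈ (p - a).divisors, d : ℕ) : ℤ) =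
      ∑ m ∈ Finset.Ico 1 p,
      ((∑ d ∈ m.divisors, d : ℕ) : ℤ) * ((∑ d ∈ (p - m).divisors, d : ℕ) : ℤ) := by
    rw [e0, e1, ← hsplit, hrefl]
    ring
  have hbp := besge_prime p hp
  linarith [stepC, hbp]

/-- For every odd prime `p`,
`24·∑_{x odd, 0 < x < p} σ₁((p²−x²)/4) = 5p³ − 6p² − 5p + 6`; this shows that the degree
of any Humbert component `F_{p²,i}` is `p³ − p`. -/
theorem humbert_component_degree_sum (p : ℕ) (hp : p.Prime) (hodd : p % 2 = 1) :
    (24 : ℤ) *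
        ∑ x ∈ (Finset.Ioo 0 p).filter (fun x => Odd x),
          (sigma1 ((p ^ 2 - x ^ 2) / 4) : ℤ) =
      5 * (p : ℤ) ^ 3 - 6 * (p : ℤ) ^ 2 - 5 * (p : ℤ) + 6 := by
  unfold sigma1
  exact humbert_component_degree_sum' p hp hodd
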